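/- arXiv:0912.4223 — 3 statements merged into one kernel-verified Lean document; each statement's English description precedes it below -/
import Mathlib

section
/- Let H be a complex Hilbert space and let T, T₁, T₂, … be bounded self-adjoint operators on H such that sup_j ‖T_j‖ < ∞ and T_j x → T x in norm for every x ∈ H (so that T_j → T in the strong resolvent sense). Assume that for each j, E_j ∈ ℝ is an eigenvalue of T_j with eigenvector φ_j ≠ 0, and that the sequence (φ_j) converges weakly to some φ ≠ 0, i.e. ⟨ψ, φ_j⟩ → ⟨ψ, φ⟩ for every ψ ∈ H. Then the limit E := lim_{j→∞} E_j exists and is an eigenvalue of T with T φ = E φ. If moreover E_j = inf σ(T_j) for every j, then E = inf σ(T). -/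
open Filter Pointwise

/-- **Abstract existence of limiting eigenvalues** (bounded-operator case of
Lemma 5.1 of the paper). If a uniformly norm-bounded sequence of bounded
self-adjoint operators `Tseq j` on a complex Hilbert space converges strongly
to `T`, each `Tseq j` has an eigenvalue `E j` with eigenvector `φseq j ≠ 0`,
and `φseq j` converges weakly to some `φ ≠ 0`, then `E := lim E j` exists and
is an eigenvalue of `T` with `T φ = E φ`; moreover if each `E j` is the bottom
of the spectrum of `Tseq j`, then `E` is the bottom of the spectrum of `T`. -/
theorem stmt0 {H : Type*} [NormedAddCommGroup H] [InnerProductSpace ℂ H] [CompleteSpace H]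
    (T : H →L[ℂ] H) (Tseq : ℕ → H →L[ℂ] H)
    (hT : IsSelfAdjoint T) (hTseq : ∀ j, IsSelfAdjoint (Tseq j))
    (hbdd : ∃ C : ℝ, ∀ j, ‖Tseq j‖ ≤ C)
    (hstrong : ∀ x : H, Tendsto (fun j => Tseq j x) atTop (nhds (T x)))
    (E : ℕ → ℝ) (φseq : ℕ → H) (hφseq : ∀ j, φseq j ≠ 0)
    (heig : ∀ j, Tseq j (φseq j) = (E j : ℂ) • φseq j)
    (φ : H) (hφ : φ ≠ 0)
    (hweak : ∀ ψ : H,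
      Tendsto (fun j => (inner ℂ ψ (φseq j) : ℂ)) atTop (nhds (inner ℂ ψ φ))) :
    ∃ Elim : ℝ, Tendsto E atTop (nhds Elim) ∧ T φ = (Elim : ℂ) • φ ∧
      ((∀ j, E j = sInf (spectrum ℝ (Tseq j))) → Elim = sInf (spectrum ℝ T)) := by
  have hSA : ∀ (A : H →L[ℂ] H), IsSelfAdjoint A → ∀ x y : H,
      (inner ℂ (A x) y : ℂ) = inner ℂ x (A y) := fun A hA x y => by
    rw [← ContinuousLinearMap.adjoint_inner_left, hA.adjoint_eq]
  -- the weakly convergent sequence is bounded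
  obtain ⟨B, hB⟩ : ∃ B : ℝ, ∀ j, ‖φseq j‖ ≤ B := by
    obtain ⟨C', hC'⟩ := banach_steinhaus (g := fun j => innerSL ℂ (φseq j)) (fun ψ => by
      obtain ⟨C, hC⟩ := ((hweak ψ).norm).bddAbove_range
      refine ⟨C, fun j => ?_⟩
      calc ‖(innerSL ℂ (φseq j)) ψ‖ = ‖(inner ℂ ψ (φseq j) : ℂ)‖ := norm_inner_symm _ _
        _ ≤ C := hC (Set.mem_range_self j))
    exact ⟨C', fun j => by simpa [innerSL_apply_norm] using hC' j⟩
  -- key limit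
  have stepA : ∀ ψ : H, Tendsto (fun j => (E j : ℂ) * inner ℂ ψ (φseq j)) atTop
      (nhds (inner ℂ ψ (T φ))) := by
    intro ψ
    have h1 : ∀ j, (E j : ℂ) * inner ℂ ψ (φseq j) = inner ℂ (Tseq j ψ) (φseq j) := fun j => by
      rw [hSA _ (hTseq j), heig j, inner_smul_right]
    have h3 : Tendsto (fun j => (inner ℂ (Tseq j ψ) (φseq j) : ℂ) - inner ℂ (T ψ) (φseq j))
        atTop (nhds 0) := by
      rw [tendsto_zero_iff_norm_tendsto_zero]
      have hb : ∀ j, ‖(inner ℂ (Tseq j ψ) (φseq j) : ℂ) - inner ℂ (T ψ) (φseq j)‖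
          ≤ ‖Tseq j ψ - T ψ‖ * B := fun j => by
        rw [← inner_sub_left]
        exact (norm_inner_le_norm _ _).trans
          (mul_le_mul_of_nonneg_left (hB j) (norm_nonneg _))
      have hT0 : Tendsto (fun j => ‖Tseq j ψ - T ψ‖ * B) atTop (nhds 0) := by
        simpa using (tendsto_iff_norm_sub_tendsto_zero.mp (hstrong ψ)).mul_const B
      exact squeeze_zero (fun j => norm_nonneg _) hb hT0
    have h4 : Tendsto (fun j => (inner ℂ (Tseq j ψ) (φseq j) : ℂ)) atTop
        (nhds (inner ℂ (T ψ) φ)) := by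
      simpa using h3.add (hweak (T ψ))
    have h5 := h4.congr (fun j => (h1 j).symm)
    rwa [hSA T hT ψ φ] at h5
  have ha : (inner ℂ φ φ : ℂ) ≠ 0 := inner_self_ne_zero.mpr hφ
  set c : ℂ := inner ℂ φ (T φ) / inner ℂ φ φ with hc
  have hEc : Tendsto (fun j => (E j : ℂ)) atTop (nhds c) := by
    refine Tendsto.congr' ?_ (((stepA φ).div (hweak φ) ha))
    filter_upwards [(hweak φ).eventually_ne ha] with j hj
    exact mul_div_cancel_right₀ _ hj
  set Elim : ℝ := c.re with hElim
  have hcim : c.im = 0 := by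
    have h1 : Tendsto (fun _ : ℕ => (0 : ℝ)) atTop (nhds c.im) := by
      simpa [Function.comp_def] using (Complex.continuous_im.tendsto c).comp hEc
    exact (tendsto_nhds_unique tendsto_const_nhds h1).symm
  have hcE : c = (Elim : ℂ) := by
    apply Complex.ext <;> simp [hElim, hcim]
  have hTend : Tendsto E atTop (nhds Elim) := by
    simpa [Function.comp_def] using (Complex.continuous_re.tendsto c).comp hEc
  have hTφ : T φ = (Elim : ℂ) • φ := by
    refine ext_inner_left ℂ fun ψ => ?_
    have h1 : Tendsto (fun j => (E j : ℂ) * inner ℂ ψ (φseq j)) atTop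
        (nhds (c * inner ℂ ψ φ)) := hEc.mul (hweak ψ)
    have h2 := tendsto_nhds_unique (stepA ψ) h1
    rw [inner_smul_right, h2, hcE]
  refine ⟨Elim, hTend, hTφ, fun hE => ?_⟩
  -- expansion helper
  have hexp : ∀ (A : H →L[ℂ] H) (r : ℝ) (x : H),
      RCLike.re (inner ℂ ((A - algebraMap ℝ (H →L[ℂ] H) r) x) x : ℂ)
        = RCLike.re (inner ℂ (A x) x : ℂ) - r * ‖x‖ ^ 2 := by
    intro A r x
    rw [ContinuousLinearMap.sub_apply, inner_sub_left, Algebra.algebraMap_eq_smul_one]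
    have h1 : ((r • (1 : H →L[ℂ] H)) x) = (r : ℂ) • x := by
      rw [ContinuousLinearMap.smul_apply, ContinuousLinearMap.one_apply, Complex.coe_smul]
    rw [h1, inner_smul_left, map_sub, Complex.conj_ofReal]
    congr 1
    rw [← inner_self_eq_norm_sq (𝕜 := ℂ) x]
    simp [RCLike.re_to_complex, Complex.re_ofReal_mul]
  -- positivity of Tseq j - E j
  have hposj : ∀ (j : ℕ) (x : H), E j * ‖x‖ ^ 2 ≤ RCLike.re (inner ℂ (Tseq j x) x : ℂ) := by
    intro j x
    have hsa : IsSelfAdjoint (Tseq j - algebraMap ℝ (H →L[ℂ] H) (E j)) :=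
      (hTseq j).sub (.algebraMap _ (star_trivial _))
    have hspec : ∀ μ ∈ spectrum ℝ (Tseq j - algebraMap ℝ (H →L[ℂ] H) (E j)), 0 ≤ μ := by
      intro μ hμ
      rw [← spectrum.sub_singleton_eq] at hμ
      obtain ⟨ν, hν, r, hr, rfl⟩ := hμ
      rw [Set.mem_singleton_iff] at hr
      subst hr
      have := csInf_le (spectrum.isCompact (Tseq j)).bddBelow hν
      rw [← hE j] at this
      show (0:ℝ) ≤ ν - E j
      linarith
    have hnn : 0 ≤ Tseq j - algebraMap ℝ (H →L[ℂ] H) (E j) :=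
      (StarOrderedRing.nonneg_iff_spectrum_nonneg _ hsa).mpr hspec
    have hip := ((ContinuousLinearMap.nonneg_iff_isPositive _).mp hnn).re_inner_nonneg_left x
    have := hexp (Tseq j) (E j) x
    rw [this] at hip
    linarith
  -- positivity of T - Elim
  have hpos : ∀ x : H, Elim * ‖x‖ ^ 2 ≤ RCLike.re (inner ℂ (T x) x : ℂ) := by
    intro x
    have h1 : Tendsto (fun j => RCLike.re (inner ℂ (Tseq j x) x : ℂ)) atTop
        (nhds (RCLike.re (inner ℂ (T x) x : ℂ))) :=
      (RCLike.continuous_re.tendsto _).comp ((hstrong x).inner tendsto_const_nhds)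
    exact le_of_tendsto_of_tendsto' (hTend.mul_const _) h1 (fun j => hposj j x)
  have hIP : (T - algebraMap ℝ (H →L[ℂ] H) Elim).IsPositive := by
    refine ContinuousLinearMap.isPositive_def'.mpr ⟨hT.sub (.algebraMap _ (star_trivial _)), fun x => ?_⟩
    show 0 ≤ RCLike.re (inner ℂ ((T - algebraMap ℝ (H →L[ℂ] H) Elim) x) x : ℂ)
    rw [hexp]
    linarith [hpos x]
  -- Elim belongs to the spectrum
  have hnt : Nontrivial H := ⟨φ, 0, hφ⟩
  have hntA : Nontrivial (H →L[ℂ] H) := ⟨1, 0, fun h => hφ (by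
    simpa using congrFun (congrArg DFunLike.coe h) φ)⟩
  have hmem : Elim ∈ spectrum ℝ T := by
    rw [spectrum.mem_iff]
    intro hu
    obtain ⟨u, hu'⟩ := hu
    apply hφ
    have h0 : (algebraMap ℝ (H →L[ℂ] H) Elim - T) φ = 0 := by
      rw [ContinuousLinearMap.sub_apply, hTφ, Algebra.algebraMap_eq_smul_one,
        ContinuousLinearMap.smul_apply, ContinuousLinearMap.one_apply, Complex.coe_smul,
        sub_self]
    calc φ = (↑u⁻¹ * ↑u : H →L[ℂ] H) φ := by rw [u.inv_mul]; rfl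
      _ = (↑u⁻¹ : H →L[ℂ] H) ((↑u : H →L[ℂ] H) φ) := rfl
      _ = 0 := by rw [hu', h0, map_zero]
  have hlow : ∀ μ ∈ spectrum ℝ T, Elim ≤ μ := by
    intro μ hμ
    have hμ' : μ - Elim ∈ spectrum ℝ (T - algebraMap ℝ (H →L[ℂ] H) Elim) := by
      rw [← spectrum.sub_singleton_eq]
      exact Set.sub_mem_sub hμ rfl
    have := spectrum_nonneg_of_nonneg
      ((ContinuousLinearMap.nonneg_iff_isPositive _).mpr hIP) hμ'
    linarith
  exact le_antisymm (le_csInf hT.spectrum_nonempty hlow)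
    (csInf_le (spectrum.isCompact T).bddBelow hmem)
end

section
/- Let κ ∈ (0,1) and set b(κ) := κ^{−1/2}(1−κ)^{1/2} and c(κ) := κ^{κ/2}(1−κ)^{(1−κ)/2}. Then for all real numbers λ, y with |λ| ≥ 1 one has |λ|^κ (λ² + y²)^{−1/2} ≤ ζ_κ(y), where ζ_κ(y) := (1+y²)^{−1/2} if |y| < b(κ) and ζ_κ(y) := c(κ)|y|^{κ−1} if |y| ≥ b(κ). -/
/-- **Pointwise resolvent-weight inequality** (Eq. (3.14)/(ralf3) of the paper,
scalar form). For `κ ∈ (0,1)`, `b(κ) = κ^{-1/2}(1-κ)^{1/2}`,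
`c(κ) = κ^{κ/2}(1-κ)^{(1-κ)/2}`, and all `λ, y ∈ ℝ` with `|λ| ≥ 1`,
`|λ|^κ (λ² + y²)^{-1/2} ≤ ζ_κ(y)` where `ζ_κ(y) = (1+y²)^{-1/2}` if
`|y| < b(κ)` and `ζ_κ(y) = c(κ)|y|^{κ-1}` if `|y| ≥ b(κ)`. -/
theorem stmt1 (κ : ℝ) (hκ : κ ∈ Set.Ioo (0 : ℝ) 1) (lam y : ℝ) (hlam : 1 ≤ |lam|) :
    |lam| ^ κ * (lam ^ 2 + y ^ 2) ^ (-(1 : ℝ) / 2) ≤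
      if |y| < κ ^ (-(1 : ℝ) / 2) * (1 - κ) ^ ((1 : ℝ) / 2) then
        (1 + y ^ 2) ^ (-(1 : ℝ) / 2)
      else
        κ ^ (κ / 2) * (1 - κ) ^ ((1 - κ) / 2) * |y| ^ (κ - 1) := by
  obtain ⟨hκ0, hκ1⟩ := hκ
  have h1κ : 0 < 1 - κ := by linarith
  set t := |lam| with htdef
  have ht0 : (0:ℝ) < t := lt_of_lt_of_le one_pos hlam
  have hsq : lam ^ 2 = t ^ 2 := (sq_abs lam).symm
  have hsum : (0:ℝ) < t ^ 2 + y ^ 2 := by positivity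
  -- helper: (x^2)^a = x^(2a)
  have hpow2 : ∀ x : ℝ, 0 ≤ x → ∀ a : ℝ, (x ^ 2) ^ a = x ^ (2*a) := by
    intro x hx a
    rw [← Real.rpow_natCast x 2, ← Real.rpow_mul hx]; norm_num
  have hcancel : ∀ a : ℝ, t ^ a * t ^ (-a) = 1 := by
    intro a; rw [← Real.rpow_add ht0]; simp
  split_ifs with hy
  · -- small |y| case
    have hb2 : (κ ^ (-(1:ℝ)/2) * (1 - κ) ^ ((1:ℝ)/2)) ^ 2 = κ⁻¹ * (1 - κ) := by
      rw [mul_pow, ← Real.rpow_natCast (κ ^ (-(1:ℝ)/2)) 2,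
        ← Real.rpow_natCast ((1-κ) ^ ((1:ℝ)/2)) 2,
        ← Real.rpow_mul hκ0.le, ← Real.rpow_mul h1κ.le]
      norm_num [Real.rpow_neg_one]
    have hy2 : κ * y ^ 2 ≤ 1 - κ := by
      have h1 : y ^ 2 < κ⁻¹ * (1 - κ) := by
        rw [← hb2, ← sq_abs y]
        exact pow_lt_pow_left₀ hy (abs_nonneg y) two_ne_zero
      have := mul_lt_mul_of_pos_left h1 hκ0
      rw [← mul_assoc, mul_inv_cancel₀ hκ0.ne', one_mul] at this
      linarith
    set s := t ^ (2*κ) with hsdef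
    have hs1 : 1 ≤ s := Real.one_le_rpow hlam (by linarith)
    have hs2 : s ≤ κ * t ^ 2 + (1 - κ) := by
      have := Real.geom_mean_le_arith_mean2_weighted hκ0.le h1κ.le (sq_nonneg t)
        zero_le_one (by ring)
      rw [Real.one_rpow, mul_one, mul_one, hpow2 t ht0.le κ] at this
      linarith
    have key : s * (1 + y ^ 2) ≤ t ^ 2 + y ^ 2 := by
      nlinarith [mul_nonneg (sub_nonneg.2 hs1) (sub_nonneg.2 hy2), hκ0, sq_nonneg y]
    have hD : (0:ℝ) < s * (1 + y ^ 2) := by positivity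
    have h1 : (lam ^ 2 + y ^ 2) ^ (-(1:ℝ)/2) ≤ (s * (1 + y ^ 2)) ^ (-(1:ℝ)/2) := by
      apply Real.rpow_le_rpow_of_nonpos hD _ (by norm_num)
      rw [hsq]; exact key
    have h2 : (s * (1 + y ^ 2)) ^ (-(1:ℝ)/2)
        = t ^ (-κ) * (1 + y ^ 2) ^ (-(1:ℝ)/2) := by
      rw [Real.mul_rpow (Real.rpow_nonneg ht0.le _) (by positivity),
        ← Real.rpow_mul ht0.le,
        show 2 * κ * (-(1:ℝ) / 2) = -κ by ring]
    calc t ^ κ * (lam ^ 2 + y ^ 2) ^ (-(1:ℝ)/2)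
        ≤ t ^ κ * (t ^ (-κ) * (1 + y ^ 2) ^ (-(1:ℝ)/2)) := by
          rw [← h2]
          exact mul_le_mul_of_nonneg_left h1 (Real.rpow_nonneg ht0.le _)
      _ = (1 + y ^ 2) ^ (-(1:ℝ)/2) := by rw [← mul_assoc, hcancel κ, one_mul]
  · -- large |y| case
    push_neg at hy
    have hb0 : (0:ℝ) < κ ^ (-(1:ℝ)/2) * (1 - κ) ^ ((1:ℝ)/2) := by positivity
    have hy0 : (0:ℝ) < |y| := lt_of_lt_of_le hb0 hy
    have hyne : y ≠ 0 := abs_pos.mp hy0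
    have hysq : y ^ 2 = |y| ^ 2 := (sq_abs y).symm
    have amgm := Real.geom_mean_le_arith_mean2_weighted hκ0.le h1κ.le
      (by positivity : (0:ℝ) ≤ t ^ 2 / κ) (by positivity : (0:ℝ) ≤ y ^ 2 / (1 - κ))
      (by ring)
    rw [mul_div_cancel₀ _ hκ0.ne', mul_div_cancel₀ _ h1κ.ne'] at amgm
    set D := (t ^ 2 / κ) ^ κ * (y ^ 2 / (1 - κ)) ^ (1 - κ) with hDdef
    have hD : 0 < D := by
      apply mul_pos <;> apply Real.rpow_pos_of_pos <;> positivity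
    have h1 : (lam ^ 2 + y ^ 2) ^ (-(1:ℝ)/2) ≤ D ^ (-(1:ℝ)/2) := by
      apply Real.rpow_le_rpow_of_nonpos hD _ (by norm_num)
      rw [hsq]; exact amgm
    have h2 : D ^ (-(1:ℝ)/2)
        = t ^ (-κ) * (κ ^ (κ/2) * (1 - κ) ^ ((1-κ)/2) * |y| ^ (κ - 1)) := by
      rw [hDdef, Real.mul_rpow (Real.rpow_nonneg (by positivity) _)
          (Real.rpow_nonneg (by positivity) _),
        ← Real.rpow_mul (by positivity), ← Real.rpow_mul (by positivity),
        Real.div_rpow (sq_nonneg t) hκ0.le, Real.div_rpow (sq_nonneg y) h1κ.le,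
        hpow2 t ht0.le, hysq, hpow2 |y| (abs_nonneg y)]
      rw [show κ * (-(1:ℝ)/2) = -(κ/2) by ring,
        show (1-κ) * (-(1:ℝ)/2) = -((1-κ)/2) by ring,
        show (2:ℝ) * -(κ/2) = -κ by ring,
        show (2:ℝ) * -((1-κ)/2) = κ - 1 by ring,
        Real.rpow_neg hκ0.le, Real.rpow_neg h1κ.le]
      field_simp
    calc t ^ κ * (lam ^ 2 + y ^ 2) ^ (-(1:ℝ)/2)
        ≤ t ^ κ * (t ^ (-κ) * (κ ^ (κ/2) * (1 - κ) ^ ((1-κ)/2) * |y| ^ (κ - 1))) := by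
          rw [← h2]
          exact mul_le_mul_of_nonneg_left h1 (Real.rpow_nonneg ht0.le _)
      _ = κ ^ (κ/2) * (1 - κ) ^ ((1-κ)/2) * |y| ^ (κ - 1) := by
          rw [← mul_assoc, hcancel κ, one_mul]
end

section
/- For all k, h ∈ ℝ³ with k ≠ 0, k−h ≠ 0, k_⊥ ≠ 0 and (k−h)_⊥ ≠ 0 one has ‖ε(k−h,1) − ε(k,1)‖ ≤ 4‖h‖/‖k_⊥‖. -/
noncomputable section

/-- `k_⊥ := (k₂, −k₁, 0)` for `k ∈ ℝ³`. -/
def perp (k : EuclideanSpace ℝ (Fin 3)) : EuclideanSpace ℝ (Fin 3) :=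
  (WithLp.equiv 2 (Fin 3 → ℝ)).symm ![k 1, -(k 0), 0]

/-- The vector cross product on `ℝ³` (as Euclidean space). -/
def cross3 (a b : EuclideanSpace ℝ (Fin 3)) : EuclideanSpace ℝ (Fin 3) :=
  (WithLp.equiv 2 (Fin 3 → ℝ)).symm
    ![a 1 * b 2 - a 2 * b 1, a 2 * b 0 - a 0 * b 2, a 0 * b 1 - a 1 * b 0]

/-- First Coulomb-gauge polarization vector `ε(k,0) := k_⊥ / ‖k_⊥‖`. -/
def eps0 (k : EuclideanSpace ℝ (Fin 3)) : EuclideanSpace ℝ (Fin 3) :=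
  ‖perp k‖⁻¹ • perp k

/-- Second Coulomb-gauge polarization vector `ε(k,1) := (k/‖k‖) × ε(k,0)`. -/
def eps1 (k : EuclideanSpace ℝ (Fin 3)) : EuclideanSpace ℝ (Fin 3) :=
  cross3 (‖k‖⁻¹ • k) (eps0 k)

lemma unit_lip {E : Type*} [NormedAddCommGroup E] [NormedSpace ℝ E]
    (x y : E) (hx : x ≠ 0) (hy : y ≠ 0) :
    ‖‖x‖⁻¹ • x - ‖y‖⁻¹ • y‖ ≤ 2 * ‖x - y‖ / ‖y‖ := by
  have hx' : (0:ℝ) < ‖x‖ := norm_pos_iff.mpr hx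
  have hy' : (0:ℝ) < ‖y‖ := norm_pos_iff.mpr hy
  have key : ‖x‖⁻¹ • x - ‖y‖⁻¹ • y = ‖y‖⁻¹ • (x - y) + (‖x‖⁻¹ - ‖y‖⁻¹) • x := by
    rw [smul_sub, sub_smul]; abel
  have habs : |‖x‖⁻¹ - ‖y‖⁻¹| ≤ ‖x - y‖ / (‖x‖ * ‖y‖) := by
    rw [inv_sub_inv hx'.ne' hy'.ne', abs_div, abs_mul, abs_norm, abs_norm]
    apply div_le_div_of_nonneg_right ?_ (by positivity)
    calc |‖y‖ - ‖x‖| ≤ ‖y - x‖ := abs_norm_sub_norm_le y x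
      _ = ‖x - y‖ := norm_sub_rev y x
  calc ‖‖x‖⁻¹ • x - ‖y‖⁻¹ • y‖ ≤ ‖‖y‖⁻¹ • (x - y)‖ + ‖(‖x‖⁻¹ - ‖y‖⁻¹) • x‖ := by
        rw [key]; exact norm_add_le _ _
    _ = ‖y‖⁻¹ * ‖x - y‖ + |‖x‖⁻¹ - ‖y‖⁻¹| * ‖x‖ := by
        rw [norm_smul, norm_smul, Real.norm_eq_abs, Real.norm_eq_abs, abs_inv, abs_norm]
    _ ≤ ‖y‖⁻¹ * ‖x - y‖ + (‖x - y‖ / (‖x‖ * ‖y‖)) * ‖x‖ := by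
        gcongr
    _ = 2 * ‖x - y‖ / ‖y‖ := by field_simp; ring

lemma cross3_norm_le (a b : EuclideanSpace ℝ (Fin 3)) : ‖cross3 a b‖ ≤ ‖a‖ * ‖b‖ := by
  rw [EuclideanSpace.norm_eq, EuclideanSpace.norm_eq, EuclideanSpace.norm_eq,
    ← Real.sqrt_mul (by positivity)]
  apply Real.sqrt_le_sqrt
  simp [cross3, Fin.sum_univ_three]
  nlinarith [sq_nonneg (a 0 * b 0 + a 1 * b 1 + a 2 * b 2), sq_nonneg (a 0), sq_nonneg (b 0)]

lemma perp_norm_le (k : EuclideanSpace ℝ (Fin 3)) : ‖perp k‖ ≤ ‖k‖ := by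
  rw [EuclideanSpace.norm_eq, EuclideanSpace.norm_eq]
  apply Real.sqrt_le_sqrt
  simp [perp, Fin.sum_univ_three]
  nlinarith [sq_nonneg (k 2)]

lemma perp_sub (k h : EuclideanSpace ℝ (Fin 3)) : perp (k - h) = perp k - perp h := by
  ext i
  fin_cases i <;> simp [perp] <;> ring


/-- **Lipschitz bound on the second polarization vector** (from the proof of
Proposition 5.5, the photon derivative bound):
`‖ε(k−h,1) − ε(k,1)‖ ≤ 4‖h‖/‖k_⊥‖` whenever `k ≠ 0`, `k−h ≠ 0`,
`k_⊥ ≠ 0` and `(k−h)_⊥ ≠ 0`. -/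
theorem stmt4 (k h : EuclideanSpace ℝ (Fin 3))
    (hk : k ≠ 0) (hkh : k - h ≠ 0)
    (hkp : perp k ≠ 0) (hkhp : perp (k - h) ≠ 0) :
    ‖eps1 (k - h) - eps1 k‖ ≤ 4 * ‖h‖ / ‖perp k‖ := by
  have hkp' : (0:ℝ) < ‖perp k‖ := norm_pos_iff.mpr hkp
  have hk' : (0:ℝ) < ‖k‖ := norm_pos_iff.mpr hk
  set a' : EuclideanSpace ℝ (Fin 3) := ‖k - h‖⁻¹ • (k - h) with ha'
  set a : EuclideanSpace ℝ (Fin 3) := ‖k‖⁻¹ • k with ha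
  have hkh' : (0:ℝ) < ‖k - h‖ := norm_pos_iff.mpr hkh
  have ha'n : ‖a'‖ = 1 := by
    rw [ha', norm_smul, norm_inv, norm_norm, inv_mul_cancel₀ hkh'.ne']
  have hbn : ‖eps0 k‖ = 1 := by
    rw [eps0, norm_smul, norm_inv, norm_norm, inv_mul_cancel₀ hkp'.ne']
  have split : eps1 (k - h) - eps1 k =
      cross3 a' (eps0 (k - h) - eps0 k) + cross3 (a' - a) (eps0 k) := by
    ext i
    fin_cases i <;>
      simp [eps1, cross3, ha', ha] <;> ring
  have hb : ‖eps0 (k - h) - eps0 k‖ ≤ 2 * ‖h‖ / ‖perp k‖ := by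
    have := unit_lip (perp (k - h)) (perp k) hkhp hkp
    rw [show perp (k - h) - perp k = -perp h by rw [perp_sub]; abel, norm_neg] at this
    calc ‖eps0 (k - h) - eps0 k‖ ≤ 2 * ‖perp h‖ / ‖perp k‖ := by
          simpa only [eps0] using this
      _ ≤ 2 * ‖h‖ / ‖perp k‖ := by gcongr; exact perp_norm_le h
  have hav : ‖a' - a‖ ≤ 2 * ‖h‖ / ‖perp k‖ := by
    have := unit_lip (k - h) k hkh hk
    rw [sub_sub_cancel_left, norm_neg] at this
    calc ‖a' - a‖ ≤ 2 * ‖h‖ / ‖k‖ := this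
      _ ≤ 2 * ‖h‖ / ‖perp k‖ := by gcongr; exact perp_norm_le k
  calc ‖eps1 (k - h) - eps1 k‖
      ≤ ‖cross3 a' (eps0 (k - h) - eps0 k)‖ + ‖cross3 (a' - a) (eps0 k)‖ := by
        rw [split]; exact norm_add_le _ _
    _ ≤ ‖a'‖ * ‖eps0 (k - h) - eps0 k‖ + ‖a' - a‖ * ‖eps0 k‖ :=
        add_le_add (cross3_norm_le _ _) (cross3_norm_le _ _)
    _ = ‖eps0 (k - h) - eps0 k‖ + ‖a' - a‖ := by rw [ha'n, hbn]; ring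
    _ ≤ 2 * ‖h‖ / ‖perp k‖ + 2 * ‖h‖ / ‖perp k‖ := add_le_add hb hav
    _ = 4 * ‖h‖ / ‖perp k‖ := by ring
end
end
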